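/- Let φ : A → B be a natural transformation between functors from k-modules to k-modules which both preserve filtered colimits. If γ_n(φ) : γ_n(A) → γ_n(B) is an isomorphism for every n ≥ 1, and additionally A(0) → B(0) is an isomorphism, then φ_V : A(V) → B(V) is an isomorphism for every k-module V. -/

import Mathlib

open CategoryTheory

noncomputable def Vbar (k : Type) [Field k] (n : ℕ) : ModuleCat k :=
  ModuleCat.of k (Fin n → k)

noncomputable def dmap (k : Type) [Field k] (n : ℕ) (i : Fin (n + 1)) :
    Vbar k (n + 1) ⟶ Vbar k n :=
  ModuleCat.ofHom (LinearMap.funLeft k k (Fin.succAbove i))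

/-- `γ_{n+1}(B) = ∩_i Ker(B(d_i)) ⊆ B(V̄_{n+1})`. -/
noncomputable def gammaF (k : Type) [Field k] (n : ℕ) (B : ModuleCat k ⥤ ModuleCat k) :
    Submodule k (B.obj (Vbar k (n + 1))) :=
  ⨅ i : Fin (n + 1), LinearMap.ker (B.map (dmap k n i)).hom

section maps
variable (k : Type) [Field k] (n : ℕ)

/-- insert 0 at coordinate `j`, as a linear map on plain function types -/
noncomputable def smapL (j : Fin (n + 1)) : (Fin n → k) →ₗ[k] (Fin (n + 1) → k) where
  toFun g := Fin.insertNth j 0 g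
  map_add' g h := by
    funext x
    refine Fin.succAboveCases j ?_ ?_ x <;> simp
  map_smul' c g := by
    funext x
    refine Fin.succAboveCases j ?_ ?_ x <;> simp

/-- zero out coordinate `m` -/
noncomputable def zmapL (m : Fin n) : (Fin n → k) →ₗ[k] (Fin n → k) :=
  LinearMap.pi (fun t => if t = m then 0 else LinearMap.proj t)

lemma smapL_dmapL (j : Fin (n + 1)) :
    (LinearMap.funLeft k k (Fin.succAbove j)).comp (smapL k n j) = LinearMap.id := by
  apply LinearMap.ext; intro g
  funext x
  exact Fin.insertNth_apply_succAbove (α := fun _ => k) j 0 g x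

lemma dmapL_smapL_dmapL (i j : Fin (n + 1)) (j' : Fin n)
    (hj' : Fin.succAbove i j' = j) :
    (LinearMap.funLeft k k (Fin.succAbove i)).comp
        ((smapL k n j).comp (LinearMap.funLeft k k (Fin.succAbove j)))
      = (zmapL k n j').comp (LinearMap.funLeft k k (Fin.succAbove i)) := by
  apply LinearMap.ext; intro g
  funext t
  show (Fin.insertNth (α := fun _ => k) j 0 (g ∘ Fin.succAbove j)) (Fin.succAbove i t)
      = (if t = j' then (0 : (Fin n → k) →ₗ[k] k) else LinearMap.proj t) (g ∘ Fin.succAbove i)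
  by_cases ht : t = j'
  · subst ht
    rw [hj', Fin.insertNth_apply_same (α := fun _ => k), if_pos rfl]
    rfl
  · have hne : Fin.succAbove i t ≠ j := by
      rw [← hj']; exact fun h => ht (Fin.succAbove_right_injective h)
    obtain ⟨u, hu⟩ := Fin.exists_succAbove_eq hne
    rw [← hu, Fin.insertNth_apply_succAbove (α := fun _ => k), if_neg ht]
    simp [hu]

noncomputable def smap (j : Fin (n + 1)) : Vbar k n ⟶ Vbar k (n + 1) :=
  ModuleCat.ofHom (smapL k n j)

noncomputable def zmap (m : Fin n) : Vbar k n ⟶ Vbar k n :=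
  ModuleCat.ofHom (zmapL k n m)

lemma smap_dmap (j : Fin (n + 1)) :
    smap k n j ≫ dmap k n j = 𝟙 (Vbar k n) :=
  ModuleCat.hom_ext (smapL_dmapL k n j)

lemma dmap_smap_dmap (i j : Fin (n + 1)) (j' : Fin n)
    (hj' : Fin.succAbove i j' = j) :
    dmap k n j ≫ smap k n j ≫ dmap k n i = dmap k n i ≫ zmap k n j' :=
  ModuleCat.hom_ext (dmapL_smapL_dmapL k n i j j' hj')

end maps

section induction
variable {k : Type} [Field k] {A B : ModuleCat k ⥤ ModuleCat k} (φ : A ⟶ B)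

lemma nat_apply {X Y : ModuleCat k} (f : X ⟶ Y) (x : A.obj X) :
    φ.app Y (A.map f x) = B.map f (φ.app X x) :=
  congrArg (fun g : A.obj X ⟶ B.obj Y => ConcreteCategory.hom g x) (φ.naturality f)

lemma map_comp_apply (C : ModuleCat k ⥤ ModuleCat k) {X Y Z : ModuleCat k} (f : X ⟶ Y)
    (g : Y ⟶ Z) (x : C.obj X) : C.map (f ≫ g) x = C.map g (C.map f x) := by
  rw [C.map_comp]; rfl

lemma bij_Vbar
    (hγ : ∀ n : ℕ, Set.BijOn (φ.app (Vbar k (n + 1)))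
        (gammaF k n A : Set (A.obj (Vbar k (n + 1))))
        (gammaF k n B : Set (B.obj (Vbar k (n + 1)))))
    (h0 : Function.Bijective (φ.app (Vbar k 0))) :
    ∀ n : ℕ, Function.Bijective (φ.app (Vbar k n)) := by
  intro n
  induction n with
  | zero => exact h0
  | succ n IH =>
    constructor
    · -- injectivity
      have h := (injective_iff_map_eq_zero (ConcreteCategory.hom (φ.app (Vbar k (n + 1))))).mpr
      apply h
      intro x hx
      have hxγ : x ∈ gammaF k n A := by
        refine Submodule.mem_iInf _ |>.mpr fun i => ?_
        rw [LinearMap.mem_ker]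
        apply IH.1
        rw [nat_apply φ (dmap k n i) x, hx, map_zero, map_zero]
      have h0γ : (0 : A.obj (Vbar k (n+1))) ∈ gammaF k n A := Submodule.zero_mem _
      exact (hγ n).injOn hxγ h0γ (by rw [hx, map_zero])
    · -- surjectivity
      have key : ∀ m : ℕ, ∀ y : B.obj (Vbar k (n + 1)),
          (∀ i : Fin (n + 1), m ≤ (i : ℕ) → B.map (dmap k n i) y = 0) →
          ∃ x, φ.app (Vbar k (n + 1)) x = y := by
        intro m
        induction m with
        | zero =>
          intro y hy
          have hyγ : y ∈ gammaF k n B := by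
            refine Submodule.mem_iInf _ |>.mpr fun i => ?_
            exact LinearMap.mem_ker.mpr (hy i (Nat.zero_le _))
          obtain ⟨x, -, hx⟩ := (hγ n).surjOn hyγ
          exact ⟨x, hx⟩
        | succ m IHm =>
          intro y hy
          by_cases hm : m < n + 1
          · set j : Fin (n + 1) := ⟨m, hm⟩ with hj
            obtain ⟨a, ha⟩ := IH.2 (B.map (dmap k n j) y)
            set y' := y - B.map (smap k n j) (B.map (dmap k n j) y) with hy'
            have hker : ∀ i : Fin (n + 1), m ≤ (i : ℕ) → B.map (dmap k n i) y' = 0 := by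
              intro i hi
              rw [hy', map_sub]
              by_cases hij : i = j
              · rw [hij]
                have h2 : B.map (dmap k n j) (B.map (smap k n j) (B.map (dmap k n j) y))
                    = B.map (dmap k n j) y := by
                  rw [← map_comp_apply, ← map_comp_apply]
                  have h3 : dmap k n j ≫ smap k n j ≫ dmap k n j = dmap k n j := by
                    rw [smap_dmap, Category.comp_id]
                  rw [h3]
                rw [h2, sub_self]
              · have hne : i ≠ j := hij
                obtain ⟨j', hj'⟩ := Fin.exists_succAbove_eq (Ne.symm hne)
                have hcomp : B.map (dmap k n i) (B.map (smap k n j) (B.map (dmap k n j) y))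
                    = B.map (zmap k n j') (B.map (dmap k n i) y) := by
                  rw [← map_comp_apply, ← map_comp_apply, ← map_comp_apply,
                    dmap_smap_dmap k n i j j' hj', map_comp_apply]
                have hiy : B.map (dmap k n i) y = 0 := by
                  apply hy i
                  rcases Nat.lt_or_ge (i : ℕ) (m + 1) with h | h
                  · exfalso; apply hne; apply Fin.ext; show (i : ℕ) = m; omega
                  · exact h
                rw [hcomp, hiy, map_zero, sub_self]
            obtain ⟨x', hx'⟩ := IHm y' hker
            refine ⟨x' + A.map (smap k n j) a, ?_⟩
            rw [map_add, hx', nat_apply φ (smap k n j) a, ha, hy']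
            abel
          · refine IHm y fun i hi => ?_
            exfalso; have := i.isLt; omega
      intro y
      exact key (n + 2) y (fun i hi => by exfalso; have := i.isLt; omega)

end induction

section fd
variable {k : Type} [Field k] {A B : ModuleCat k ⥤ ModuleCat k}

lemma bij_fd (φ : A ⟶ B) (hbij : ∀ n : ℕ, Function.Bijective (φ.app (Vbar k n)))
    (W : ModuleCat k) [FiniteDimensional k W] : Function.Bijective (φ.app W) := by
  let e : W ≅ Vbar k (Module.finrank k W) :=
    ((Module.finBasis k W).equivFun).toModuleIso
  have heq : φ.app W = A.map e.hom ≫ φ.app (Vbar k (Module.finrank k W)) ≫ B.map e.inv := by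
    rw [← Category.assoc, φ.naturality e.hom, Category.assoc, ← B.map_comp, e.hom_inv_id,
      B.map_id, Category.comp_id]
  have hfun : ⇑(φ.app W) = ⇑(B.map e.inv) ∘ ⇑(φ.app (Vbar k (Module.finrank k W)))
      ∘ ⇑(A.map e.hom) := by rw [heq]; rfl
  rw [hfun]
  exact ((ConcreteCategory.bijective_of_isIso (B.map e.inv)).comp
    (hbij _)).comp (ConcreteCategory.bijective_of_isIso (A.map e.hom))

end fd

section colim
variable (k : Type) [Field k] (V : ModuleCat k)

noncomputable def Fdiag : Finset V ⥤ ModuleCat k where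
  obj s := ModuleCat.of k (Submodule.span k (s : Set V))
  map {s t} f := ModuleCat.ofHom
    (Submodule.inclusion (Submodule.span_mono (Finset.coe_subset.mpr (leOfHom f))))
  map_id s := rfl
  map_comp f g := rfl

noncomputable def ccn : Limits.Cocone (Fdiag k V) where
  pt := V
  ι :=
    { app := fun s => ModuleCat.ofHom (Submodule.span k ((s : Finset V) : Set V)).subtype
      naturality := fun s t f => rfl }

lemma ccn_w (t : Limits.Cocone (Fdiag k V)) {s s' : Finset V} (h : s ≤ s')
    (x : Submodule.span k ((s : Finset V) : Set V)) :
    t.ι.app s x = t.ι.app s'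
      (Submodule.inclusion (Submodule.span_mono (Finset.coe_subset.mpr h)) x) := by
  rw [← t.w (homOfLE h)]; rfl

open Classical in
noncomputable def descFun (t : Limits.Cocone (Fdiag k V)) : V →ₗ[k] t.pt where
  toFun v := t.ι.app {v} ⟨v, Submodule.subset_span (by simp)⟩
  map_add' u v := by
    classical
    set S : Finset V := insert u (insert v {u + v}) with hS
    have hu : ({u} : Finset V) ≤ S := by intro x hx; simp at hx; simp [hS, hx]
    have hv : ({v} : Finset V) ≤ S := by intro x hx; simp at hx; simp [hS, hx]
    have huv : ({u + v} : Finset V) ≤ S := by intro x hx; simp at hx; simp [hS, hx]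
    dsimp only
    rw [ccn_w k V t huv, ccn_w k V t hu, ccn_w k V t hv]
    erw [← map_add (ConcreteCategory.hom (t.ι.app S))]
    exact congrArg _ (Subtype.ext rfl)
  map_smul' c v := by
    classical
    set S : Finset V := insert v {c • v} with hS
    have hv : ({v} : Finset V) ≤ S := by intro x hx; simp at hx; simp [hS, hx]
    have hcv : ({c • v} : Finset V) ≤ S := by intro x hx; simp at hx; simp [hS, hx]
    dsimp only
    rw [ccn_w k V t hcv, ccn_w k V t hv]
    simp only [RingHom.id_apply]
    erw [← map_smul (ConcreteCategory.hom (t.ι.app S))]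
    exact congrArg _ (Subtype.ext rfl)

noncomputable def ccnIsColimit : Limits.IsColimit (ccn k V) where
  desc t := ModuleCat.ofHom (descFun k V t)
  fac t s := by
    apply ModuleCat.hom_ext; apply LinearMap.ext; intro x
    classical
    set w : V := (x : Submodule.span k ((s : Finset V) : Set V)).val with hw
    change t.ι.app {w} ⟨w, Submodule.subset_span (by simp)⟩ = t.ι.app s x
    have h1 : ({w} : Finset V) ≤ insert w s := by simp
    have h2 : s ≤ insert w s := Finset.subset_insert _ _
    rw [ccn_w k V t h1, ccn_w k V t h2 x]
    exact congrArg _ (Subtype.ext rfl)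
  uniq t m hm := by
    apply ModuleCat.hom_ext; apply LinearMap.ext; intro v
    have h1 : m v = m ((ccn k V).ι.app {v} ⟨v, Submodule.subset_span (Finset.mem_coe.mpr (Finset.mem_singleton_self v))⟩) := rfl
    rw [h1]
    have h2 := ConcreteCategory.congr_hom (hm {v}) (⟨v, Submodule.subset_span (Finset.mem_coe.mpr (Finset.mem_singleton_self v))⟩ :
      Submodule.span k (({v} : Finset V) : Set V))
    exact h2

end colim

/-- If `φ : A → B` is a natural transformation between functors preserving filtered colimits such
that `γ_n(φ)` is an isomorphism for all `n ≥ 1` and `A(0) → B(0)` is an isomorphism, then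
`φ_V : A(V) → B(V)` is an isomorphism for every `k`-module `V`. -/
theorem stmt5 (k : Type) [Field k] (A B : ModuleCat k ⥤ ModuleCat k)
    [Limits.PreservesFilteredColimits A] [Limits.PreservesFilteredColimits B]
    (φ : A ⟶ B)
    (hγ : ∀ n : ℕ, Set.BijOn (φ.app (Vbar k (n + 1)))
        (gammaF k n A : Set (A.obj (Vbar k (n + 1))))
        (gammaF k n B : Set (B.obj (Vbar k (n + 1)))))
    (h0 : Function.Bijective (φ.app (Vbar k 0))) :
    ∀ V : ModuleCat k, Function.Bijective (φ.app V) := by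
  intro V
  classical
  have hVb := bij_Vbar φ hγ h0
  have hc := ccnIsColimit k V
  haveI := Limits.preservesSmallestFilteredColimits_of_preservesFilteredColimits A
  haveI := Limits.preservesSmallestFilteredColimits_of_preservesFilteredColimits B
  have hA := Limits.isColimitOfPreserves A hc
  have hB := Limits.isColimitOfPreserves B hc
  have bijs : ∀ s : Finset V, Function.Bijective (φ.app ((Fdiag k V).obj s)) := by
    intro s
    haveI : FiniteDimensional k ((Fdiag k V).obj s) :=
      inferInstanceAs (FiniteDimensional k (Submodule.span k ((s : Finset V) : Set V)))
    exact bij_fd φ hVb _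
  let α : Fdiag k V ⋙ A ≅ Fdiag k V ⋙ B := NatIso.ofComponents
    (fun s => (LinearEquiv.ofBijective (φ.app ((Fdiag k V).obj s)).hom (bijs s)).toModuleIso)
    (fun {s t} f => φ.naturality ((Fdiag k V).map f))
  have heq : φ.app V = (Limits.IsColimit.coconePointsIsoOfNatIso hA hB α).hom := by
    apply hA.hom_ext
    intro s
    refine Eq.trans ?_ (Limits.IsColimit.comp_coconePointsIsoOfNatIso_hom hA hB α s).symm
    exact φ.naturality ((ccn k V).ι.app s)
  rw [heq]
  exact ConcreteCategory.bijective_of_isIso (Limits.IsColimit.coconePointsIsoOfNatIso hA hB α).hom
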